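/- arXiv:1210.0417 — 2 statements merged into one kernel-verified Lean document; each statement's English description precedes it below -/
import Mathlib

section
/- If $S$ and $T$ are bounded selfadjoint invertible operators on a real separable Hilbert space $H$ such that $S - T$ is compact, then the intersection $E_-(S) \cap E_+(T)$ of the negative spectral subspace of $S$ with the positive spectral subspace of $T$ is finite-dimensional. -/
open Set

/-- `E` is the negative spectral subspace of the bounded selfadjoint operator `L`:
a closed `L`-invariant subspace on which `L` is negative definite and on whose
orthogonal complement `L` is nonnegative. For selfadjoint invertible `L` this
characterises the range of the spectral projection associated to `(-∞,0)`. -/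
def IsNegSpectralSub {H : Type*} [NormedAddCommGroup H] [InnerProductSpace ℝ H]
    (L : H →L[ℝ] H) (E : Submodule ℝ H) : Prop :=
  IsClosed (E : Set H) ∧ (∀ u ∈ E, L u ∈ E) ∧
    (∀ u ∈ E, u ≠ 0 → inner (𝕜 := ℝ) (L u) u < 0) ∧
    (∀ u ∈ Eᗮ, 0 ≤ inner (𝕜 := ℝ) (L u) u)

/-- The positive spectral subspace of `L` is the negative spectral subspace of `-L`. -/
def IsPosSpectralSub {H : Type*} [NormedAddCommGroup H] [InnerProductSpace ℝ H]
    (L : H →L[ℝ] H) (E : Submodule ℝ H) : Prop :=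
  IsNegSpectralSub (-L) E

/-- Quantitative gap: an invertible selfadjoint operator which is negative on an
invariant subspace is uniformly negative there. -/
lemma negSpectralSub_gap {H : Type*} [NormedAddCommGroup H] [InnerProductSpace ℝ H]
    [CompleteSpace H]
    (L : H →L[ℝ] H) (hL : IsSelfAdjoint L) (hinv : IsUnit L)
    (E : Submodule ℝ H) (hE : IsNegSpectralSub L E) :
    ∃ c : ℝ, 0 < c ∧ ∀ u ∈ E, c * ‖u‖ ^ 2 ≤ inner (𝕜 := ℝ) (-(L u)) u := by
  obtain ⟨v, hv⟩ := hinv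
  set M : H →L[ℝ] H := ↑v⁻¹ with hM
  have hML : ∀ u : H, M (L u) = u := by
    intro u
    have h1 : (↑v⁻¹ * ↑v : H →L[ℝ] H) = 1 := v.inv_mul
    have := congrArg (fun (A : H →L[ℝ] H) => A u) h1
    simpa [hv] using this
  have hlow : ∀ u : H, ‖u‖ ≤ ‖M‖ * ‖L u‖ := fun u => by
    conv_lhs => rw [← hML u]
    exact M.le_opNorm _
  have hpos : ∀ u ∈ E, (0:ℝ) ≤ inner (𝕜 := ℝ) (-(L u)) u := by
    intro u hu
    rcases eq_or_ne u 0 with rfl | hne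
    · simp
    · have := hE.2.2.1 u hu hne
      rw [inner_neg_left]; linarith
  refine ⟨(‖M‖ ^ 2 * ‖L‖ + 1)⁻¹, by positivity, fun u hu => ?_⟩
  have hwE : L u ∈ E := hE.2.1 u hu
  have hsym : ∀ x y : H, inner (𝕜 := ℝ) (L x) y = inner (𝕜 := ℝ) (L y) x := by
    intro x y
    exact (hL.isSymmetric x y).trans (real_inner_comm x (L y)).symm
  have hquad : ∀ t : ℝ, 0 ≤ (inner (𝕜 := ℝ) (-(L (L u))) (L u)) * (t * t)
      + (2 * inner (𝕜 := ℝ) (-(L u)) (L u)) * t + inner (𝕜 := ℝ) (-(L u)) u := by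
    intro t
    have hmem : u + t • L u ∈ E := E.add_mem hu (E.smul_mem t hwE)
    have h0 := hpos _ hmem
    have hexp : inner (𝕜 := ℝ) (-(L (u + t • L u))) (u + t • L u)
        = (inner (𝕜 := ℝ) (-(L (L u))) (L u)) * (t * t)
          + (2 * inner (𝕜 := ℝ) (-(L u)) (L u)) * t + inner (𝕜 := ℝ) (-(L u)) u := by
      have hsw : inner (𝕜 := ℝ) (L (L u)) u = inner (𝕜 := ℝ) (L u) (L u) := hsym (L u) u
      simp only [map_add, map_smul, inner_neg_left, neg_add, inner_add_left, inner_add_right,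
        inner_smul_left, inner_smul_right, RCLike.conj_to_real]
      rw [hsw]
      ring
    rw [hexp] at h0
    exact h0
  have hdisc := discrim_le_zero hquad
  rw [discrim] at hdisc
  have hBuw : inner (𝕜 := ℝ) (-(L u)) (L u) = -(‖L u‖ ^ 2) := by
    rw [inner_neg_left, real_inner_self_eq_norm_sq]
  have hBww : inner (𝕜 := ℝ) (-(L (L u))) (L u) ≤ ‖L‖ * ‖L u‖ * ‖L u‖ := by
    calc inner (𝕜 := ℝ) (-(L (L u))) (L u) ≤ ‖-(L (L u))‖ * ‖L u‖ := real_inner_le_norm _ _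
    _ ≤ ‖L‖ * ‖L u‖ * ‖L u‖ := by
        rw [norm_neg]
        have := L.le_opNorm (L u)
        nlinarith [norm_nonneg (L u)]
  have hBuu := hpos u hu
  rw [hBuw] at hdisc
  have hkey : ‖L u‖ ^ 2 * ‖L u‖ ^ 2 ≤ (‖L‖ * ‖L u‖ * ‖L u‖) * inner (𝕜 := ℝ) (-(L u)) u := by
    nlinarith [hpos (L u) hwE, hBww, hBuu]
  have hun : ‖u‖ ≤ ‖M‖ * ‖L u‖ := hlow u
  rcases eq_or_ne (‖L u‖) 0 with hw0 | hw0
  · have : ‖u‖ = 0 := le_antisymm (by rw [hw0] at hun; simpa using hun) (norm_nonneg u)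
    rw [this]
    simpa using hBuu
  · have hwpos : 0 < ‖L u‖ := lt_of_le_of_ne (norm_nonneg _) (Ne.symm hw0)
    have hw2 : (0:ℝ) < ‖L u‖ ^ 2 := by positivity
    have h2 : ‖L u‖ ^ 2 ≤ ‖L‖ * inner (𝕜 := ℝ) (-(L u)) u := by
      have h3 : ‖L u‖ ^ 2 * ‖L u‖ ^ 2 ≤ (‖L‖ * inner (𝕜 := ℝ) (-(L u)) u) * ‖L u‖ ^ 2 := by
        nlinarith [hkey]
      exact (mul_le_mul_iff_of_pos_right hw2).mp h3
    rw [inv_mul_le_iff₀ (by positivity)]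
    nlinarith [mul_le_mul_of_nonneg_left h2 (sq_nonneg ‖M‖), hBuu,
      mul_self_le_mul_self (norm_nonneg u) hun]

/-- If `S` and `T` are bounded selfadjoint invertible operators on a real separable
Hilbert space `H` such that `S - T` is compact, then `E₋(S) ∩ E₊(T)` is
finite-dimensional. -/
theorem finiteDimensional_inf_negSpectral_posSpectral
    {H : Type*} [NormedAddCommGroup H] [InnerProductSpace ℝ H] [CompleteSpace H]
    [TopologicalSpace.SeparableSpace H]
    (S T : H →L[ℝ] H) (hS : IsSelfAdjoint S) (hT : IsSelfAdjoint T)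
    (hSinv : IsUnit S) (hTinv : IsUnit T)
    (hcpt : IsCompactOperator (S - T))
    (Em Ep : Submodule ℝ H)
    (hEm : IsNegSpectralSub S Em) (hEp : IsPosSpectralSub T Ep) :
    FiniteDimensional ℝ ↥(Em ⊓ Ep) := by
  obtain ⟨cS, hcS, hS'⟩ := negSpectralSub_gap S hS hSinv Em hEm
  obtain ⟨cT, hcT, hT'⟩ := negSpectralSub_gap (-T) hT.neg hTinv.neg Ep hEp
  set F : Submodule ℝ H := Em ⊓ Ep with hF
  -- F is closed, hence complete
  have hFclosed : IsClosed (F : Set H) := by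
    have : (F : Set H) = (Em : Set H) ∩ (Ep : Set H) := rfl
    rw [this]
    exact hEm.1.inter hEp.1
  haveI : CompleteSpace F := hFclosed.completeSpace_coe
  -- the compact operator S - T is bounded below on F
  have hbound : ∀ u ∈ F, (cS + cT) * ‖u‖ ≤ ‖(S - T) u‖ := by
    intro u hu
    have huS : u ∈ Em := hu.1
    have huT : u ∈ Ep := hu.2
    have h1 := hS' u huS
    have h2 := hT' u huT
    have h2' : cT * ‖u‖ ^ 2 ≤ inner (𝕜 := ℝ) (T u) u := by
      simpa using h2
    have h3 : (cS + cT) * ‖u‖ ^ 2 ≤ inner (𝕜 := ℝ) (-((S - T) u)) u := by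
      have : inner (𝕜 := ℝ) (-((S - T) u)) u
          = inner (𝕜 := ℝ) (-(S u)) u + inner (𝕜 := ℝ) (T u) u := by
        simp [inner_add_left, inner_neg_left, inner_sub_left]
        ring
      rw [this]
      nlinarith
    have h4 : inner (𝕜 := ℝ) (-((S - T) u)) u ≤ ‖(S - T) u‖ * ‖u‖ := by
      calc inner (𝕜 := ℝ) (-((S - T) u)) u ≤ ‖-((S - T) u)‖ * ‖u‖ := real_inner_le_norm _ _
      _ = ‖(S - T) u‖ * ‖u‖ := by rw [norm_neg]
    rcases eq_or_ne u 0 with rfl | hne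
    · simp
    · have hupos : 0 < ‖u‖ := norm_pos_iff.mpr hne
      have : (cS + cT) * ‖u‖ * ‖u‖ ≤ ‖(S - T) u‖ * ‖u‖ := by nlinarith
      exact le_of_mul_le_mul_right this hupos
  -- package as a compact operator on F which is antilipschitz
  set Kf : F →L[ℝ] H := (S - T).comp F.subtypeL with hKf
  have hKfc : IsCompactOperator Kf := hcpt.comp_clm F.subtypeL
  have hanti : AntilipschitzWith (Real.toNNReal (cS + cT)⁻¹) Kf := by
    apply Kf.antilipschitz_of_bound
    intro x
    have hb := hbound (x : H) x.2
    have hnx : ‖x‖ = ‖(x : H)‖ := rfl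
    have hKx : ‖Kf x‖ = ‖(S - T) (x : H)‖ := rfl
    rw [hnx, hKx]
    rw [Real.coe_toNNReal _ (by positivity)]
    rw [inv_mul_eq_div, le_div_iff₀ (by linarith)]
    linarith [hb]
  -- the closed unit ball of F is compact
  have hcompact : IsCompact (Metric.closedBall (0 : F) 1) := by
    rw [isCompact_iff_totallyBounded_isComplete]
    refine ⟨?_, Metric.isClosed_closedBall.isComplete⟩
    have himg : IsCompact (closure (Kf '' Metric.closedBall (0 : F) 1)) :=
      hKfc.isCompact_closure_image_of_bounded (Metric.isBounded_closedBall)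
    have htb : TotallyBounded (Kf '' Metric.closedBall (0 : F) 1) :=
      himg.totallyBounded.subset subset_closure
    exact (totallyBounded_image_iff
      (hanti.isUniformInducing Kf.uniformContinuous)).mp htb
  exact FiniteDimensional.of_isCompact_closedBall₀ ℝ one_pos hcompact
end

section
/- If $S$ and $T$ are bounded selfadjoint invertible operators on a Hilbert space $H$ with $S - T$ compact, then the difference $P_-(S) - P_-(T)$ of their negative spectral projections is a compact operator. -/
open Set

/-- `P` is the negative spectral projection of `L`: an orthogonal projection
(selfadjoint idempotent) whose range is the negative spectral subspace of `L`. -/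
def IsNegSpectralProj {H : Type*} [NormedAddCommGroup H] [InnerProductSpace ℝ H] [CompleteSpace H]
    (L P : H →L[ℝ] H) : Prop :=
  IsSelfAdjoint P ∧ P ∘L P = P ∧ IsNegSpectralSub L (LinearMap.range P.toLinearMap)

/-! ### Auxiliary material: Newton–Schulz iteration for the operator sign function -/

open Polynomial Filter Topology

set_option maxHeartbeats 1000000
set_option synthInstance.maxHeartbeats 400000
set_option linter.unusedSectionVars false

noncomputable section NegSpectralAux

/-- Newton–Schulz error polynomials: `nsF (n+1) = (3 (nsF n)^2 + (nsF n)^3)/4`. -/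
def nsF : ℕ → Polynomial ℝ
  | 0 => X
  | n + 1 => C (1/4 : ℝ) * ((nsF n) ^ 2 * (C 3 + nsF n))

/-- Newton–Schulz iterate polynomials. -/
def nsQ (M : ℝ) : ℕ → Polynomial ℝ
  | 0 => C (1/M)
  | n + 1 => nsQ M n * (1 + C (1/2 : ℝ) * nsF n)

lemma nsCoeffMul {p q : Polynomial ℝ} (hp : ∀ k, 0 ≤ p.coeff k) (hq : ∀ k, 0 ≤ q.coeff k) :
    ∀ k, 0 ≤ (p * q).coeff k := by
  intro k
  rw [Polynomial.coeff_mul]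
  exact Finset.sum_nonneg fun i _ => mul_nonneg (hp _) (hq _)

lemma nsCoeffAdd {p q : Polynomial ℝ} (hp : ∀ k, 0 ≤ p.coeff k) (hq : ∀ k, 0 ≤ q.coeff k) :
    ∀ k, 0 ≤ (p + q).coeff k := by
  intro k
  rw [Polynomial.coeff_add]
  exact add_nonneg (hp k) (hq k)

lemma nsCoeffC {c : ℝ} (hc : 0 ≤ c) : ∀ k, 0 ≤ (C c).coeff k := by
  intro k
  rw [Polynomial.coeff_C]
  split <;> simp [hc]

lemma nsF_coeff_nonneg (n : ℕ) : ∀ k, 0 ≤ (nsF n).coeff k := by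
  induction n with
  | zero =>
      intro k
      rw [nsF, Polynomial.coeff_X]
      split <;> norm_num
  | succ n ih =>
      rw [nsF, sq]
      exact nsCoeffMul (nsCoeffC (by norm_num))
        (nsCoeffMul (nsCoeffMul ih ih) (nsCoeffAdd (nsCoeffC (by norm_num)) ih))

lemma nsQ_coeff_nonneg {M : ℝ} (hM : 0 < M) (n : ℕ) : ∀ k, 0 ≤ (nsQ M n).coeff k := by
  induction n with
  | zero =>
      rw [nsQ]
      exact nsCoeffC (by positivity)
  | succ n ih =>
      rw [nsQ]
      refine nsCoeffMul ih (nsCoeffAdd (fun k => ?_)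
        (nsCoeffMul (nsCoeffC (by norm_num)) (nsF_coeff_nonneg n)))
      rw [Polynomial.coeff_one]
      split <;> norm_num

lemma nsF_eval_zero (n : ℕ) : (nsF n).eval 0 = 0 := by
  induction n with
  | zero => simp [nsF]
  | succ n ih => simp [nsF, ih]

lemma nsQ_eval_zero (M : ℝ) (n : ℕ) : (nsQ M n).eval 0 = 1/M := by
  induction n with
  | zero => simp [nsQ]
  | succ n ih => simp [nsQ, ih, nsF_eval_zero]

lemma nsQ_coeff_zero (M : ℝ) (n : ℕ) : (nsQ M n).coeff 0 = 1/M := by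
  rw [Polynomial.coeff_zero_eq_eval_zero, nsQ_eval_zero]

/-- The key algebraic identity for the Newton–Schulz iteration. -/
lemma nsF_key {M : ℝ} (hM : M ≠ 0) (n : ℕ) :
    (1 : Polynomial ℝ) - C (M^2) * ((1 - X) * (nsQ M n)^2) = nsF n := by
  induction n with
  | zero =>
      apply Polynomial.funext
      intro x
      simp only [nsQ, nsF, eval_sub, eval_one, eval_mul, eval_C, eval_pow, eval_X]
      field_simp
      ring
  | succ n ih =>
      apply Polynomial.funext
      intro x
      have hx := congrArg (fun p => Polynomial.eval x p) ih
      simp only [eval_sub, eval_one, eval_mul, eval_C, eval_pow, eval_X, eval_add] at hx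
      simp only [nsQ, nsF, eval_sub, eval_one, eval_mul, eval_C, eval_pow, eval_X, eval_add]
      linear_combination (1 + (1/2) * Polynomial.eval x (nsF n))^2 * hx

variable {H : Type*} [NormedAddCommGroup H] [InnerProductSpace ℝ H] [CompleteSpace H]

local notation "⟪" x ", " y "⟫" => @inner ℝ _ _ x y

/-! #### Compact operator helpers -/

lemma nsCptAdd {F G : H →L[ℝ] H} (hF : IsCompactOperator F) (hG : IsCompactOperator G) :
    IsCompactOperator (F + G) := by
  exact hF.add hG

lemma nsCptSmul (c : ℝ) {F : H →L[ℝ] H} (hF : IsCompactOperator F) :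
    IsCompactOperator (c • F) := by
  exact hF.smul c

lemma nsCptMulLeft (X : H →L[ℝ] H) {F : H →L[ℝ] H} (hF : IsCompactOperator F) :
    IsCompactOperator (X * F) := by
  exact hF.clm_comp X

lemma nsCptMulRight (X : H →L[ℝ] H) {F : H →L[ℝ] H} (hF : IsCompactOperator F) :
    IsCompactOperator (F * X) := by
  exact hF.comp_clm X

lemma nsCptZero : IsCompactOperator (0 : H →L[ℝ] H) := by
  have : (⇑(0 : H →L[ℝ] H)) = (0 : H → H) := by
    funext x; simp
  rw [this]
  exact isCompactOperator_zero

lemma nsCptCongr {F G : H →L[ℝ] H} (h : F = G) (hF : IsCompactOperator F) :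
    IsCompactOperator G := h ▸ hF

lemma nsCptPowSub {X Y : H →L[ℝ] H} (h : IsCompactOperator (X - Y)) (n : ℕ) :
    IsCompactOperator (X ^ n - Y ^ n) := by
  induction n with
  | zero => simpa using nsCptZero
  | succ n ih =>
      have hid : X ^ (n+1) - Y ^ (n+1) = X * (X ^ n - Y ^ n) + (X - Y) * Y ^ n := by
        rw [pow_succ', pow_succ']; noncomm_ring
      rw [hid]
      exact nsCptAdd (nsCptMulLeft X ih) (nsCptMulRight (Y ^ n) h)

lemma nsCptAevalSub {X Y : H →L[ℝ] H} (h : IsCompactOperator (X - Y)) (p : Polynomial ℝ) :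
    IsCompactOperator (aeval X p - aeval Y p) := by
  induction p using Polynomial.induction_on' with
  | add p q hp hq =>
      have hid : aeval X (p + q) - aeval Y (p + q)
          = (aeval X p - aeval Y p) + (aeval X q - aeval Y q) := by
        simp only [map_add]; abel
      rw [hid]
      exact nsCptAdd hp hq
  | monomial n a =>
      have hid : aeval X (monomial n a) - aeval Y (monomial n a) = a • (X ^ n - Y ^ n) := by
        rw [Polynomial.aeval_monomial, Polynomial.aeval_monomial,
          Algebra.algebraMap_eq_smul_one, smul_mul_assoc, smul_mul_assoc, one_mul, one_mul,
          smul_sub]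
      rw [hid]
      exact nsCptSmul a (nsCptPowSub h n)

/-! #### Selfadjoint helpers -/

lemma nsSymm {L : H →L[ℝ] H} (hL : IsSelfAdjoint L) (x y : H) : ⟪L x, y⟫ = ⟪x, L y⟫ :=
  hL.isSymmetric x y

lemma nsNormSmul (c : ℝ) (F : H →L[ℝ] H) : ‖c • F‖ = |c| * ‖F‖ := by
  have := norm_smul c F
  simpa using this

lemma nsAevalSelfAdjoint {B : H →L[ℝ] H} (hB : IsSelfAdjoint B) (p : Polynomial ℝ) :
    IsSelfAdjoint (aeval B p) := by
  induction p using Polynomial.induction_on' with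
  | add p q hp hq => simpa only [map_add] using hp.add hq
  | monomial n a =>
      have : aeval B (monomial n a) = a • B ^ n := by
        rw [Polynomial.aeval_monomial, Algebra.algebraMap_eq_smul_one, smul_mul_assoc, one_mul]
      rw [this, IsSelfAdjoint, star_smul, star_trivial, (hB.pow n).star_eq]

lemma nsAevalCommute {L B : H →L[ℝ] H} (h : Commute L B) (p : Polynomial ℝ) :
    Commute L (aeval B p) := by
  induction p using Polynomial.induction_on' with
  | add p q hp hq => simpa only [map_add] using hp.add_right hq
  | monomial n a =>
      have : aeval B (monomial n a) = a • B ^ n := by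
        rw [Polynomial.aeval_monomial, Algebra.algebraMap_eq_smul_one, smul_mul_assoc, one_mul]
      rw [this]
      exact ((h.pow_right n).smul_right a)

/-- Cauchy–Schwarz for a positive symmetric operator. -/
lemma nsCS {B : H →L[ℝ] H} (hB : IsSelfAdjoint B) (h0 : ∀ x, 0 ≤ ⟪B x, x⟫) (x y : H) :
    ⟪B x, y⟫ ^ 2 ≤ ⟪B x, x⟫ * ⟪B y, y⟫ := by
  have key : ∀ t : ℝ, 0 ≤ ⟪B y, y⟫ * (t * t) + (2 * ⟪B x, y⟫) * t + ⟪B x, x⟫ := by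
    intro t
    have h := h0 (x + t • y)
    have hBapp : B (x + t • y) = B x + t • B y := by
      rw [map_add, map_smul]
    rw [hBapp] at h
    have hyx : ⟪B y, x⟫ = ⟪B x, y⟫ := by
      rw [nsSymm hB y x, real_inner_comm]
    simp only [inner_add_left, inner_add_right, real_inner_smul_left, real_inner_smul_right,
      hyx] at h
    nlinarith [h]
  have hd := discrim_le_zero key
  rw [discrim] at hd
  nlinarith [hd]

/-- A positive symmetric operator with form bounded by `r` has norm at most `r`. -/
lemma nsNormLeOfForm {B : H →L[ℝ] H} (hB : IsSelfAdjoint B) {r : ℝ} (hr : 0 ≤ r)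
    (h0 : ∀ x, 0 ≤ ⟪B x, x⟫) (h1 : ∀ x, ⟪B x, x⟫ ≤ r * ‖x‖ ^ 2) : ‖B‖ ≤ r := by
  refine ContinuousLinearMap.opNorm_le_bound _ hr fun x => ?_
  have hCS := nsCS hB h0 x (B x)
  have e1 : ⟪B x, B x⟫ = ‖B x‖ ^ 2 := real_inner_self_eq_norm_sq (B x)
  rw [e1] at hCS
  have h2 : ⟪B x, x⟫ ≤ r * ‖x‖ ^ 2 := h1 x
  have h3 : ⟪B (B x), B x⟫ ≤ r * ‖B x‖ ^ 2 := h1 (B x)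
  have h4 : (‖B x‖ ^ 2) ^ 2 ≤ (r * ‖x‖ ^ 2) * (r * ‖B x‖ ^ 2) :=
    le_trans hCS (mul_le_mul h2 h3 (h0 (B x)) (by positivity))
  have h5 : ‖B x‖ ^ 2 ≤ (r * ‖x‖) ^ 2 := by
    rcases eq_or_lt_of_le (norm_nonneg (B x)) with h6 | h6
    · rw [← h6]
      have : (0:ℝ) ^ 2 = 0 := by norm_num
      rw [this]
      positivity
    · have h7 : 0 < ‖B x‖ ^ 2 := by positivity
      nlinarith [h4]
  exact (pow_le_pow_iff_left₀ (norm_nonneg (B x)) (by positivity : (0:ℝ) ≤ r * ‖x‖)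
    (two_ne_zero)).mp h5

/-- Powers of a positive symmetric operator are form-positive. -/
lemma nsPowForm {B : H →L[ℝ] H} (hB : IsSelfAdjoint B) (h0 : ∀ x, 0 ≤ ⟪B x, x⟫) (k : ℕ)
    (x : H) : 0 ≤ ⟪(B ^ k) x, x⟫ := by
  rcases Nat.even_or_odd k with ⟨m, hm⟩ | ⟨m, hm⟩
  · subst hm
    have : (B ^ (m + m)) x = (B ^ m) ((B ^ m) x) := by
      rw [pow_add, ContinuousLinearMap.mul_apply]
    rw [this, nsSymm (hB.pow m) ((B ^ m) x) x]
    · exact real_inner_self_nonneg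
  · subst hm
    have hpow : B ^ (2 * m + 1) = B ^ m * (B * B ^ m) := by
      have : 2 * m + 1 = m + (1 + m) := by omega
      rw [this, pow_add, pow_add, pow_one]
    have happ : (B ^ (2 * m + 1)) x = (B ^ m) (B ((B ^ m) x)) := by
      rw [hpow]
      simp [ContinuousLinearMap.mul_apply]
    rw [happ, nsSymm (hB.pow m) (B ((B ^ m) x)) x]
    exact h0 ((B ^ m) x)

/-- Form lower bound for `aeval B p` when `p` has nonnegative coefficients. -/
lemma nsAevalForm {B : H →L[ℝ] H} (hB : IsSelfAdjoint B) (h0 : ∀ x, 0 ≤ ⟪B x, x⟫)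
    {p : Polynomial ℝ} (hp : ∀ k, 0 ≤ p.coeff k) (x : H) :
    p.coeff 0 * ‖x‖ ^ 2 ≤ ⟪(aeval B p) x, x⟫ := by
  rw [Polynomial.aeval_eq_sum_range]
  rw [ContinuousLinearMap.sum_apply, sum_inner]
  rw [Finset.sum_range_succ']
  simp only [ContinuousLinearMap.smul_apply, real_inner_smul_left, pow_zero,
    ContinuousLinearMap.one_apply]
  have h1 : p.coeff 0 * ⟪x, x⟫ = p.coeff 0 * ‖x‖ ^ 2 := by
    rw [real_inner_self_eq_norm_sq]
  rw [h1]
  have h2 : 0 ≤ ∑ i ∈ Finset.range p.natDegree,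
      p.coeff (i + 1) * ⟪(B ^ (i + 1)) x, x⟫ :=
    Finset.sum_nonneg fun i _ => mul_nonneg (hp _) (nsPowForm hB h0 _ x)
  linarith

/-- Geometric sum bound. -/
lemma nsGeomSum {r : ℝ} (h0 : 0 ≤ r) (h1 : r < 1) (n : ℕ) :
    ∑ k ∈ Finset.range n, r ^ k ≤ 1 / (1 - r) := by
  have h2 : 0 < 1 - r := by linarith
  have h3 := geom_sum_eq (ne_of_lt h1) n
  have h4 : (r ^ n - 1) / (r - 1) = (1 - r ^ n) / (1 - r) := by
    rw [← neg_div_neg_eq]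
    ring_nf
  rw [h3, h4]
  have h5 : 1 - r ^ n ≤ 1 := by
    have : 0 ≤ r ^ n := pow_nonneg h0 n
    linarith
  exact (div_le_div_iff_of_pos_right h2).mpr h5

end NegSpectralAux

noncomputable section NegSpectralMain

variable {H : Type*} [NormedAddCommGroup H] [InnerProductSpace ℝ H] [CompleteSpace H]

local notation "⟪" x ", " y "⟫" => @inner ℝ _ _ x y

open Polynomial Filter Topology

/-- Operator Newton–Schulz iterates for `(L²)^{-1/2}`. -/
def nsY (M : ℝ) (L : H →L[ℝ] H) (n : ℕ) : H →L[ℝ] H :=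
  aeval (1 - (1 / M ^ 2 : ℝ) • (L * L)) (nsQ M n)

/-- Main convergence lemma: the Newton–Schulz iterates converge to an inverse square root `R`
of `L²` which is selfadjoint, commutes with `L` and has form bounded below. -/
theorem nsMain {L : H →L[ℝ] H} (hL : IsSelfAdjoint L) {c M : ℝ}
    (hc : 0 < c) (hcL : ∀ x, c * ‖x‖ ≤ ‖L x‖) (hM : ‖L‖ < M) (hcM : c ≤ ‖L‖) :
    ∃ R : H →L[ℝ] H, Tendsto (nsY M L) atTop (𝓝 R) ∧ IsSelfAdjoint R ∧
      L * R = R * L ∧ (L * L) * (R * R) = 1 ∧ ∀ x, (1 / M) * ‖x‖ ^ 2 ≤ ⟪R x, x⟫ := by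
  have hM0 : 0 < M := lt_of_le_of_lt (norm_nonneg L) hM
  have hMne : M ≠ 0 := ne_of_gt hM0
  set B : H →L[ℝ] H := 1 - (1 / M ^ 2 : ℝ) • (L * L) with hBdef
  set r : ℝ := 1 - c ^ 2 / M ^ 2 with hrdef
  have hcMlt : c < M := lt_of_le_of_lt hcM hM
  have hr0 : 0 < r := by
    rw [hrdef]
    have : c ^ 2 < M ^ 2 := by nlinarith
    have h2 : c ^ 2 / M ^ 2 < 1 := by
      rw [div_lt_one (by positivity)]; exact this
    linarith
  have hr1 : r < 1 := by
    rw [hrdef]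
    have : 0 < c ^ 2 / M ^ 2 := by positivity
    linarith
  -- basic facts about B
  have hBapp : ∀ x, B x = x - (1 / M ^ 2 : ℝ) • L (L x) := by
    intro x
    rw [hBdef]
    simp [ContinuousLinearMap.sub_apply, ContinuousLinearMap.smul_apply,
      ContinuousLinearMap.mul_apply]
  have hBform : ∀ x, ⟪B x, x⟫ = ‖x‖ ^ 2 - (1 / M ^ 2) * ‖L x‖ ^ 2 := by
    intro x
    rw [hBapp x]
    rw [inner_sub_left, real_inner_smul_left]
    rw [real_inner_self_eq_norm_sq]
    have : ⟪L (L x), x⟫ = ‖L x‖ ^ 2 := by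
      rw [nsSymm hL (L x) x, real_inner_self_eq_norm_sq]
    rw [this]
  have hLsa2 : IsSelfAdjoint (L * L) := by
    rw [IsSelfAdjoint, star_mul, hL.star_eq]
  have hBsa : IsSelfAdjoint B := by
    have hs : IsSelfAdjoint ((1 / M ^ 2 : ℝ) • (L * L)) := by
      rw [IsSelfAdjoint, star_smul, star_trivial, hLsa2.star_eq]
    rw [hBdef]
    exact (IsSelfAdjoint.one (H →L[ℝ] H)).sub hs
  have hBpos : ∀ x, 0 ≤ ⟪B x, x⟫ := by
    intro x
    rw [hBform x]
    have h1 : ‖L x‖ ≤ ‖L‖ * ‖x‖ := L.le_opNorm x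
    have h2 : ‖L x‖ ^ 2 ≤ M ^ 2 * ‖x‖ ^ 2 := by
      have hLM : 0 ≤ ‖L‖ := norm_nonneg L
      have h2a := mul_le_mul h1 h1 (norm_nonneg (L x)) (mul_nonneg hLM (norm_nonneg x))
      nlinarith [sq_nonneg ‖x‖, mul_pos (sub_pos.mpr hM) (by positivity : (0:ℝ) < M + ‖L‖)]
    have hM2 : (0:ℝ) < 1 / M ^ 2 := by positivity
    have h3 := mul_le_mul_of_nonneg_left h2 (le_of_lt hM2)
    have hMM : 1 / M ^ 2 * (M ^ 2 * ‖x‖ ^ 2) = ‖x‖ ^ 2 := by field_simp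
    linarith
  have hBub : ∀ x, ⟪B x, x⟫ ≤ r * ‖x‖ ^ 2 := by
    intro x
    rw [hBform x, hrdef]
    have h1 : c * ‖x‖ ≤ ‖L x‖ := hcL x
    have h2 : c ^ 2 * ‖x‖ ^ 2 ≤ ‖L x‖ ^ 2 := by
      have h2a := mul_le_mul h1 h1 (mul_nonneg hc.le (norm_nonneg x)) (norm_nonneg (L x))
      nlinarith
    have hM2 : (0:ℝ) < 1 / M ^ 2 := by positivity
    have h3 := mul_le_mul_of_nonneg_left h2 (le_of_lt hM2)
    have heq : (1 - c ^ 2 / M ^ 2) * ‖x‖ ^ 2 = ‖x‖ ^ 2 - 1 / M ^ 2 * (c ^ 2 * ‖x‖ ^ 2) := by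
      ring
    linarith
  have hBnorm : ‖B‖ ≤ r := nsNormLeOfForm hBsa (le_of_lt hr0) hBpos hBub
  -- the iterates
  set Y : ℕ → H →L[ℝ] H := nsY M L with hYdef
  set E : ℕ → H →L[ℝ] H := fun n => aeval B (nsF n) with hEdef
  have hE0 : E 0 = B := by simp [hEdef, nsF]
  have hErec : ∀ n, E (n + 1) = (1/4 : ℝ) • ((E n) ^ 2 * (3 + E n)) := by
    intro n
    rw [hEdef]
    show aeval B (nsF (n+1)) = _
    rw [nsF, map_mul, map_mul, map_add, map_pow, Polynomial.aeval_C, Polynomial.aeval_C,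
      map_ofNat, Algebra.algebraMap_eq_smul_one, smul_mul_assoc, one_mul]
  have hYrec : ∀ n, Y (n + 1) = Y n + (1/2 : ℝ) • (Y n * E n) := by
    intro n
    rw [hYdef]
    show aeval B (nsQ M (n+1)) = _
    rw [nsQ, map_mul, map_add, map_one, map_mul, Polynomial.aeval_C,
      Algebra.algebraMap_eq_smul_one, smul_mul_assoc, one_mul, mul_add, mul_one, mul_smul_comm]
    rfl
  have hY0 : Y 0 = (1 / M : ℝ) • 1 := by
    rw [hYdef]
    show aeval B (nsQ M 0) = _
    rw [nsQ, Polynomial.aeval_C, Algebra.algebraMap_eq_smul_one]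
  have hnorm_one : ‖(1 : H →L[ℝ] H)‖ ≤ 1 := ContinuousLinearMap.norm_id_le
  have hnorm3 : ‖(3 : H →L[ℝ] H)‖ ≤ 3 := by
    have h3 : (3 : H →L[ℝ] H) = (3 : ℝ) • (1 : H →L[ℝ] H) := by
      rw [← Algebra.algebraMap_eq_smul_one, map_ofNat]
    rw [h3, nsNormSmul]
    have h4 : |(3:ℝ)| = 3 := by norm_num
    rw [h4]
    nlinarith [hnorm_one]
  have hrpow : ∀ k : ℕ, r ^ (k + 1) ≤ r := by
    intro k
    calc r ^ (k + 1) ≤ r ^ 1 := pow_le_pow_of_le_one (le_of_lt hr0) (le_of_lt hr1) (by omega)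
      _ = r := pow_one r
  -- norm bound on the errors
  have hEbound : ∀ n, ‖E n‖ ≤ r ^ (n + 1) := by
    intro n
    induction n with
    | zero => simpa [hE0] using hBnorm
    | succ n ih =>
        rw [hErec n]
        have h1 : ‖(E n) ^ 2 * (3 + E n)‖ ≤ ‖E n‖ ^ 2 * (3 + ‖E n‖) := by
          calc ‖(E n) ^ 2 * (3 + E n)‖ ≤ ‖(E n) ^ 2‖ * ‖3 + E n‖ := norm_mul_le _ _
            _ ≤ ‖E n‖ ^ 2 * (3 + ‖E n‖) := by
                apply mul_le_mul (norm_pow_le' _ (by norm_num))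
                · calc ‖(3 : H →L[ℝ] H) + E n‖ ≤ ‖(3 : H →L[ℝ] H)‖ + ‖E n‖ := norm_add_le _ _
                    _ ≤ 3 + ‖E n‖ := by linarith [hnorm3]
                · exact norm_nonneg _
                · positivity
        have hEn0 : 0 ≤ ‖E n‖ := norm_nonneg _
        have hEn1 : ‖E n‖ ≤ r := le_trans ih (hrpow n)
        rw [nsNormSmul]
        have h14 : |(1/4 : ℝ)| = 1/4 := by norm_num
        rw [h14]
        have hrn : 0 ≤ r ^ (n+1) := pow_nonneg (le_of_lt hr0) _
        calc (1/4) * ‖(E n) ^ 2 * (3 + E n)‖ ≤ (1/4) * (‖E n‖ ^ 2 * (3 + ‖E n‖)) := by linarith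
          _ ≤ (1/4) * ((r ^ (n+1)) ^ 2 * (3 + 1)) := by
              have : ‖E n‖ ^ 2 ≤ (r ^ (n+1)) ^ 2 := by nlinarith
              have h2 : ‖E n‖ ≤ 1 := le_trans hEn1 (le_of_lt hr1)
              nlinarith
          _ ≤ r ^ (n + 1 + 1) := by
              have h5 : r ^ (n+1) ≤ r := hrpow n
              have h6 : r ^ (n+1+1) = r ^ (n+1) * r := by ring
              nlinarith
  -- norm bound on the iterates
  set KY : ℝ := (1 / M) * Real.exp (1 / (1 - r)) with hKYdef
  have hKY0 : 0 < KY := by positivity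
  have hYbound : ∀ n, ‖Y n‖ ≤ (1 / M) * Real.exp (∑ k ∈ Finset.range n, r ^ (k + 1) / 2) := by
    intro n
    induction n with
    | zero =>
        rw [hY0]
        simp only [Finset.range_zero, Finset.sum_empty, Real.exp_zero, mul_one]
        rw [nsNormSmul]
        have h4 : |(1/M : ℝ)| = 1/M := abs_of_pos (by positivity)
        rw [h4]
        nlinarith [hnorm_one, (by positivity : (0:ℝ) < 1/M)]
    | succ n ih =>
        rw [hYrec n]
        have h1 : ‖Y (n) + (1/2 : ℝ) • (Y n * E n)‖ ≤ ‖Y n‖ * (1 + r ^ (n+1) / 2) := by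
          calc ‖Y n + (1/2 : ℝ) • (Y n * E n)‖ ≤ ‖Y n‖ + ‖(1/2 : ℝ) • (Y n * E n)‖ :=
            norm_add_le _ _
            _ ≤ ‖Y n‖ + (1/2) * (‖Y n‖ * ‖E n‖) := by
                rw [nsNormSmul]
                have h12 : |(1/2 : ℝ)| = 1/2 := by norm_num
                rw [h12]
                have := norm_mul_le (Y n) (E n)
                nlinarith
            _ ≤ ‖Y n‖ * (1 + r ^ (n+1) / 2) := by
                have h2 := hEbound n
                have h3 : 0 ≤ ‖Y n‖ := norm_nonneg _
                nlinarith
        have h4 : (1 : ℝ) + r ^ (n+1) / 2 ≤ Real.exp (r ^ (n+1) / 2) := by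
          have := Real.add_one_le_exp (r ^ (n+1) / 2)
          linarith
        calc ‖Y n + (1/2 : ℝ) • (Y n * E n)‖ ≤ ‖Y n‖ * (1 + r ^ (n+1) / 2) := h1
          _ ≤ ((1 / M) * Real.exp (∑ k ∈ Finset.range n, r ^ (k + 1) / 2))
              * Real.exp (r ^ (n+1) / 2) := by
              apply mul_le_mul ih h4 (by positivity) (by positivity)
          _ = (1 / M) * Real.exp (∑ k ∈ Finset.range (n+1), r ^ (k + 1) / 2) := by
              rw [mul_assoc, ← Real.exp_add, Finset.sum_range_succ]
  have hYKY : ∀ n, ‖Y n‖ ≤ KY := by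
    intro n
    refine le_trans (hYbound n) ?_
    rw [hKYdef]
    have h1 : ∑ k ∈ Finset.range n, r ^ (k + 1) / 2 ≤ 1 / (1 - r) := by
      have h2 : ∀ k ∈ Finset.range n, r ^ (k + 1) / 2 ≤ r ^ k := by
        intro k _
        have h3 : r ^ (k+1) ≤ r ^ k :=
          pow_le_pow_of_le_one (le_of_lt hr0) (le_of_lt hr1) (by omega : k ≤ k + 1)
        have h4 : 0 ≤ r ^ (k+1) := pow_nonneg (le_of_lt hr0) _
        linarith
      calc ∑ k ∈ Finset.range n, r ^ (k + 1) / 2 ≤ ∑ k ∈ Finset.range n, r ^ k :=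
        Finset.sum_le_sum h2
        _ ≤ 1 / (1 - r) := nsGeomSum (le_of_lt hr0) hr1 n
    have := Real.exp_le_exp.mpr h1
    have hM1 : (0:ℝ) < 1 / M := by positivity
    nlinarith
  -- Cauchy sequence
  have hCauchy : CauchySeq Y := by
    apply cauchySeq_of_le_geometric r (KY * r / 2) hr1
    intro n
    rw [dist_eq_norm, hYrec n]
    have : Y n - (Y n + (1/2 : ℝ) • (Y n * E n)) = -((1/2 : ℝ) • (Y n * E n)) := by abel
    rw [this, norm_neg, nsNormSmul]
    have h12 : |(1/2 : ℝ)| = 1/2 := by norm_num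
    rw [h12]
    have h1 : ‖Y n * E n‖ ≤ KY * r ^ (n+1) := by
      calc ‖Y n * E n‖ ≤ ‖Y n‖ * ‖E n‖ := norm_mul_le _ _
        _ ≤ KY * r ^ (n+1) := mul_le_mul (hYKY n) (hEbound n) (norm_nonneg _) (le_of_lt hKY0)
    have h4 : KY * r ^ (n+1) = KY * r / 2 * r ^ n * 2 := by rw [pow_succ]; ring
    linarith
  obtain ⟨R, hR⟩ := cauchySeq_tendsto_of_complete hCauchy
  refine ⟨R, hR, ?_, ?_, ?_, ?_⟩
  -- selfadjoint
  · rw [ContinuousLinearMap.isSelfAdjoint_iff_isSymmetric]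
    intro x y
    have hYsa : ∀ n, IsSelfAdjoint (Y n) := fun n => nsAevalSelfAdjoint hBsa _
    have h1 : Tendsto (fun n => ⟪(Y n) x, y⟫) atTop (𝓝 ⟪R x, y⟫) := by
      have hx : Tendsto (fun n => (Y n) x) atTop (𝓝 (R x)) := by
        have := (ContinuousLinearMap.apply ℝ H x).continuous.tendsto R
        exact this.comp hR
      exact hx.inner tendsto_const_nhds
    have h2 : Tendsto (fun n => ⟪x, (Y n) y⟫) atTop (𝓝 ⟪x, R y⟫) := by
      have hy : Tendsto (fun n => (Y n) y) atTop (𝓝 (R y)) := by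
        have := (ContinuousLinearMap.apply ℝ H y).continuous.tendsto R
        exact this.comp hR
      exact tendsto_const_nhds.inner hy
    have h3 : (fun n => ⟪(Y n) x, y⟫) = (fun n => ⟪x, (Y n) y⟫) := by
      funext n
      exact nsSymm (hYsa n) x y
    rw [h3] at h1
    exact tendsto_nhds_unique h1 h2
  -- commutes
  · have hLB : Commute L B := by
      rw [hBdef]
      exact (Commute.one_right L).sub_right
        (((Commute.refl L).mul_right (Commute.refl L)).smul_right _)
    have hYcomm : ∀ n, L * Y n = Y n * L := fun n => nsAevalCommute hLB _
    have h1 : Tendsto (fun n => L * Y n) atTop (𝓝 (L * R)) := tendsto_const_nhds.mul hR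
    have h2 : Tendsto (fun n => Y n * L) atTop (𝓝 (R * L)) := hR.mul tendsto_const_nhds
    have h3 : (fun n => L * Y n) = (fun n => Y n * L) := funext hYcomm
    rw [h3] at h1
    exact tendsto_nhds_unique h1 h2
  -- inverse square root
  · have hEeq0 : ∀ n, aeval B (nsF n)
        = 1 - (L * L) * (aeval B (nsQ M n) * aeval B (nsQ M n)) := by
      intro n
      rw [← nsF_key hMne n, map_sub, map_one, map_mul, map_mul, Polynomial.aeval_C,
        Algebra.algebraMap_eq_smul_one, map_pow, map_sub, map_one, Polynomial.aeval_X,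
        smul_mul_assoc, one_mul]
      congr 1
      have h1 : (1 : H →L[ℝ] H) - B = (1 / M ^ 2 : ℝ) • (L * L) := by
        rw [hBdef, sub_sub_cancel]
      rw [h1, smul_mul_assoc, smul_smul]
      have h2 : (M ^ 2) * (1 / M ^ 2) = 1 := by field_simp
      rw [h2, one_smul, sq]
    have hEeq : ∀ n, E n = 1 - (L * L) * (Y n * Y n) := fun n => hEeq0 n
    have h1 : Tendsto (fun n => (1 : H →L[ℝ] H) - (L * L) * (Y n * Y n)) atTop
        (𝓝 (1 - (L * L) * (R * R))) := by
      apply Tendsto.sub tendsto_const_nhds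
      exact tendsto_const_nhds.mul (hR.mul hR)
    have h2 : Tendsto E atTop (𝓝 (0 : H →L[ℝ] H)) := by
      apply squeeze_zero_norm hEbound
      have h3 : Tendsto (fun n : ℕ => r ^ (n + 1)) atTop (𝓝 0) := by
        have := tendsto_pow_atTop_nhds_zero_of_lt_one (le_of_lt hr0) hr1
        exact this.comp (tendsto_add_atTop_nat 1)
      exact h3
    have h3 : (fun n => (1 : H →L[ℝ] H) - (L * L) * (Y n * Y n)) = E := by
      funext n; rw [hEeq n]
    rw [h3] at h1
    have h4 := tendsto_nhds_unique h1 h2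
    have h5 : (L * L) * (R * R) = 1 - (1 - (L * L) * (R * R)) := by abel
    rw [h5, h4, sub_zero]
  -- form bound
  · intro x
    have hYform : ∀ n, (1 / M) * ‖x‖ ^ 2 ≤ ⟪(Y n) x, x⟫ := by
      intro n
      have := nsAevalForm hBsa hBpos (nsQ_coeff_nonneg hM0 n) x
      rwa [nsQ_coeff_zero] at this
    have h1 : Tendsto (fun n => ⟪(Y n) x, x⟫) atTop (𝓝 ⟪R x, x⟫) := by
      have hx : Tendsto (fun n => (Y n) x) atTop (𝓝 (R x)) := by
        have := (ContinuousLinearMap.apply ℝ H x).continuous.tendsto R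
        exact this.comp hR
      exact hx.inner tendsto_const_nhds
    exact ge_of_tendsto' h1 hYform


/-- Core uniqueness lemma: if `U` is a selfadjoint involution commuting with `L` such that
`L U` is uniformly positive, then any negative spectral projection of `L` equals
`(1 - U)/2`. -/
theorem nsProjEqU {L P U : H →L[ℝ] H} (hL : IsSelfAdjoint L) {γ : ℝ} (hγ : 0 < γ)
    (hUsa : IsSelfAdjoint U) (hUU : U * U = 1) (hLU : L * U = U * L)
    (hLUform : ∀ x, γ * ‖x‖ ^ 2 ≤ ⟪L (U x), x⟫)
    (hP : IsNegSpectralProj L P) : P = (1/2 : ℝ) • (1 - U) := by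
  obtain ⟨hPsa, hPP, hE1, hE2, hE3, hE4⟩ := hP
  have hUUx : ∀ x, U (U x) = x := by
    intro x
    have := congrArg (fun (A : H →L[ℝ] H) => A x) hUU
    simpa [ContinuousLinearMap.mul_apply] using this
  have hLUx : ∀ x, L (U x) = U (L x) := by
    intro x
    have := congrArg (fun (A : H →L[ℝ] H) => A x) hLU
    simpa [ContinuousLinearMap.mul_apply] using this
  have horth : ∀ v w : H, U v = -v → U w = w → ⟪v, w⟫ = 0 := by
    intro v w hv hw
    have h1 : ⟪U v, w⟫ = ⟪v, U w⟫ := nsSymm hUsa v w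
    rw [hv, hw, inner_neg_left] at h1
    linarith
  have hqneg : ∀ v, U v = -v → ⟪L v, v⟫ ≤ -(γ * ‖v‖ ^ 2) := by
    intro v hv
    have h1 := hLUform v
    rw [hv, map_neg, inner_neg_left] at h1
    linarith
  have hqpos : ∀ w, U w = w → γ * ‖w‖ ^ 2 ≤ ⟪L w, w⟫ := by
    intro w hw
    have h1 := hLUform w
    rwa [hw] at h1
  -- constants for the amplification operator
  set m : ℝ := max (max (‖L‖ + 1) (‖L‖ ^ 2 / γ)) γ with hmdef
  have hm1 : ‖L‖ + 1 ≤ m := le_trans (le_max_left _ _) (le_max_left _ _)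
  have hmγ2 : ‖L‖ ^ 2 / γ ≤ m := le_trans (le_max_right _ _) (le_max_left _ _)
  have hm3 : γ ≤ m := le_max_right _ _
  have hm0 : 0 < m := lt_of_lt_of_le hγ hm3
  have hm2 : ‖L‖ ^ 2 ≤ m * γ := (div_le_iff₀ hγ).mp hmγ2
  set μ : ℝ := γ / 2 with hμdef
  have hμ0 : 0 < μ := by rw [hμdef]; positivity
  have hμm : μ < m := by
    have : γ / 2 < γ := by linarith
    rw [hμdef]
    linarith
  have hmμ0 : 0 < m - μ := by linarith
  set G : H →L[ℝ] H := m • 1 + L with hGdef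
  have hGapp : ∀ x, G x = m • x + L x := by
    intro x
    rw [hGdef]
    simp [ContinuousLinearMap.add_apply, ContinuousLinearMap.smul_apply,
      ContinuousLinearMap.one_apply]
  have hUG : U * G = G * U := by
    rw [hGdef, mul_add, add_mul, mul_smul_comm, smul_mul_assoc, mul_one, one_mul, hLU]
  have hUGx : ∀ x, U (G x) = G (U x) := by
    intro x
    have := congrArg (fun (A : H →L[ℝ] H) => A x) hUG
    simpa [ContinuousLinearMap.mul_apply] using this
  have hGneg : ∀ v, U v = -v → U (G v) = -(G v) := by
    intro v hv
    rw [hUGx v, hv, map_neg]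
  have hGpos : ∀ w, U w = w → U (G w) = G w := by
    intro w hw
    rw [hUGx w, hw]
  have hGsq : ∀ x, ‖G x‖ ^ 2 = m ^ 2 * ‖x‖ ^ 2 + 2 * (m * ⟪L x, x⟫) + ‖L x‖ ^ 2 := by
    intro x
    rw [hGapp x, norm_add_sq_real, norm_smul, real_inner_smul_left]
    have habs : ‖m‖ = m := by rw [Real.norm_eq_abs, abs_of_pos hm0]
    rw [habs, real_inner_comm x (L x)]
    ring
  have hLx2 : ∀ x : H, ‖L x‖ ^ 2 ≤ ‖L‖ ^ 2 * ‖x‖ ^ 2 := by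
    intro x
    have h1 := L.le_opNorm x
    nlinarith [norm_nonneg (L x), norm_nonneg L, norm_nonneg x]
  have hGnegnorm : ∀ v, U v = -v → ‖G v‖ ≤ (m - μ) * ‖v‖ := by
    intro v hv
    have hq := hqneg v hv
    have h1 := hGsq v
    have h2 := hLx2 v
    have hq2 : 2 * (m * ⟪L v, v⟫) ≤ 2 * (m * (-(γ * ‖v‖ ^ 2))) := by
      have := mul_le_mul_of_nonneg_left hq hm0.le
      linarith
    have hL2 : ‖L‖ ^ 2 * ‖v‖ ^ 2 ≤ (m * γ) * ‖v‖ ^ 2 :=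
      mul_le_mul_of_nonneg_right hm2 (sq_nonneg _)
    have hsq' : ‖G v‖ ^ 2 ≤ ((m - γ / 2) * ‖v‖) ^ 2 := by
      nlinarith [h1, hq2, h2, hL2, sq_nonneg (γ * ‖v‖)]
    have hsq : ‖G v‖ ^ 2 ≤ ((m - μ) * ‖v‖) ^ 2 := by
      rw [hμdef]
      exact hsq'
    exact (pow_le_pow_iff_left₀ (norm_nonneg _)
      (mul_nonneg hmμ0.le (norm_nonneg v)) two_ne_zero).mp hsq
  have hGposnorm : ∀ w, U w = w → (m + μ) * ‖w‖ ≤ ‖G w‖ := by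
    intro w hw
    have hq := hqpos w hw
    have h1 := hGsq w
    have hq2 : 2 * (m * (γ * ‖w‖ ^ 2)) ≤ 2 * (m * ⟪L w, w⟫) := by
      have := mul_le_mul_of_nonneg_left hq hm0.le
      linarith
    have hprod : (0:ℝ) ≤ (m - γ / 4) * γ * ‖w‖ ^ 2 :=
      mul_nonneg (mul_nonneg (by linarith : (0:ℝ) ≤ m - γ / 4) hγ.le) (sq_nonneg _)
    have hsq' : ((m + γ / 2) * ‖w‖) ^ 2 ≤ ‖G w‖ ^ 2 := by
      nlinarith [h1, hq2, sq_nonneg ‖L w‖, hprod]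
    have hsq : ((m + μ) * ‖w‖) ^ 2 ≤ ‖G w‖ ^ 2 := by
      rw [hμdef]
      exact hsq'
    exact (pow_le_pow_iff_left₀ (mul_nonneg (by linarith) (norm_nonneg w))
      (norm_nonneg _) two_ne_zero).mp hsq
  have hGiter_neg : ∀ n : ℕ, ∀ v : H, U v = -v →
      U ((G ^ n) v) = -((G ^ n) v) ∧ ‖(G ^ n) v‖ ≤ (m - μ) ^ n * ‖v‖ := by
    intro n
    induction n with
    | zero =>
        intro v hv
        simp only [pow_zero, ContinuousLinearMap.one_apply]
        exact ⟨hv, by simp⟩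
    | succ n ih =>
        intro v hv
        have happ : (G ^ (n + 1)) v = (G ^ n) (G v) := by
          rw [pow_succ, ContinuousLinearMap.mul_apply]
        have hGv := hGneg v hv
        have hih := ih (G v) hGv
        rw [happ]
        refine ⟨hih.1, ?_⟩
        calc ‖(G ^ n) (G v)‖ ≤ (m - μ) ^ n * ‖G v‖ := hih.2
          _ ≤ (m - μ) ^ n * ((m - μ) * ‖v‖) :=
              mul_le_mul_of_nonneg_left (hGnegnorm v hv) (pow_nonneg hmμ0.le n)
          _ = (m - μ) ^ (n + 1) * ‖v‖ := by rw [pow_succ]; ring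
  have hGiter_pos : ∀ n : ℕ, ∀ w : H, U w = w →
      U ((G ^ n) w) = (G ^ n) w ∧ (m + μ) ^ n * ‖w‖ ≤ ‖(G ^ n) w‖ := by
    intro n
    induction n with
    | zero =>
        intro w hw
        simp only [pow_zero, ContinuousLinearMap.one_apply]
        exact ⟨hw, by simp⟩
    | succ n ih =>
        intro w hw
        have happ : (G ^ (n + 1)) w = (G ^ n) (G w) := by
          rw [pow_succ, ContinuousLinearMap.mul_apply]
        have hGw := hGpos w hw
        have hih := ih (G w) hGw
        rw [happ]
        refine ⟨hih.1, ?_⟩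
        calc (m + μ) ^ (n + 1) * ‖w‖ = (m + μ) ^ n * ((m + μ) * ‖w‖) := by
              rw [pow_succ]; ring
          _ ≤ (m + μ) ^ n * ‖G w‖ :=
              mul_le_mul_of_nonneg_left (hGposnorm w hw) (pow_nonneg (by linarith) n)
          _ ≤ ‖(G ^ n) (G w)‖ := hih.2
  -- fixed points of P are exactly the range of P
  have hfixmem : ∀ u : H, u ∈ LinearMap.range P.toLinearMap ↔ P u = u := by
    intro u
    constructor
    · rintro ⟨y, rfl⟩
      have := congrArg (fun (A : H →L[ℝ] H) => A y) hPP
      simpa [ContinuousLinearMap.comp_apply] using this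
    · intro h
      exact ⟨u, h⟩
  -- the range of P is invariant under G
  have hmemG : ∀ u ∈ LinearMap.range P.toLinearMap, G u ∈ LinearMap.range P.toLinearMap := by
    intro u hu
    rw [show G u = m • u + L u from hGapp u]
    exact Submodule.add_mem _ (Submodule.smul_mem _ m hu) (hE2 u hu)
  have hmemGn : ∀ n : ℕ, ∀ u ∈ LinearMap.range P.toLinearMap,
      (G ^ n) u ∈ LinearMap.range P.toLinearMap := by
    intro n
    induction n with
    | zero => intro u hu; simpa using hu
    | succ n ih =>
        intro u hu
        have happ : (G ^ (n + 1)) u = (G ^ n) (G u) := by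
          rw [pow_succ, ContinuousLinearMap.mul_apply]
        rw [happ]
        exact ih (G u) (hmemG u hu)
  -- every element of the range of P is a (-1)-eigenvector of U
  have hEneg : ∀ u, u ∈ LinearMap.range P.toLinearMap → U u = -u := by
    intro u hu
    set v : H := (1/2 : ℝ) • (u - U u) with hvdef
    set w : H := (1/2 : ℝ) • (u + U u) with hwdef
    have hvw : u = v + w := by
      rw [hvdef, hwdef, ← smul_add]
      have h1 : (u - U u) + (u + U u) = (2:ℝ) • u := by module
      rw [h1, smul_smul]
      norm_num
    have hUv : U v = -v := by
      rw [hvdef, map_smul, map_sub, hUUx u, ← smul_neg]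
      congr 1
      abel
    have hUw : U w = w := by
      rw [hwdef, map_smul, map_add, hUUx u]
      congr 1
      abel
    by_contra hne
    have hw0 : w ≠ 0 := by
      intro h0
      apply hne
      have hu' : u = v := by rw [hvw, h0, add_zero]
      rw [hu', hUv]
    have hwn : 0 < ‖w‖ := norm_pos_iff.mpr hw0
    have hρ : 1 < ((m + μ) / (m - μ)) ^ 2 := by
      have h1 : 1 < (m + μ) / (m - μ) := by
        rw [lt_div_iff₀ hmμ0]
        linarith
      nlinarith
    obtain ⟨n, hn⟩ := pow_unbounded_of_one_lt ((‖L‖ * ‖v‖ ^ 2) / (γ * ‖w‖ ^ 2)) hρ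
    have hp0 : (0:ℝ) < (m - μ) ^ n := pow_pos hmμ0 n
    have hq0 : (0:ℝ) < (m + μ) ^ n := pow_pos (by linarith) n
    have hb0 : (0:ℝ) < γ * ‖w‖ ^ 2 := mul_pos hγ (by positivity)
    have hrw : (((m + μ) / (m - μ)) ^ 2) ^ n = ((m + μ) ^ n) ^ 2 / ((m - μ) ^ n) ^ 2 := by
      rw [← pow_mul, mul_comm 2 n, pow_mul, div_pow, div_pow]
    rw [hrw] at hn
    have key : ‖L‖ * ‖v‖ ^ 2 * ((m - μ) ^ n) ^ 2 < γ * ‖w‖ ^ 2 * ((m + μ) ^ n) ^ 2 := by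
      have h2 := (div_lt_div_iff₀ hb0 (by positivity : (0:ℝ) < ((m - μ) ^ n) ^ 2)).mp hn
      linarith
    set a : H := (G ^ n) v with hadef
    set b : H := (G ^ n) w with hbdef
    have ha := hGiter_neg n v hUv
    have hb := hGiter_pos n w hUw
    rw [← hadef] at ha
    rw [← hbdef] at hb
    have hzdef : (G ^ n) u = a + b := by rw [hadef, hbdef, hvw, map_add]
    have hz : (G ^ n) u ∈ LinearMap.range P.toLinearMap := hmemGn n u hu
    have hcross : ⟪L a, b⟫ = 0 := by
      apply horth (L a) b _ hb.1
      rw [← hLUx a, ha.1, map_neg]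
    have hcross2 : ⟪L b, a⟫ = 0 := by
      rw [nsSymm hL b a, real_inner_comm]
      exact hcross
    have hexp : ⟪L ((G ^ n) u), (G ^ n) u⟫ = ⟪L a, a⟫ + ⟪L b, b⟫ := by
      rw [hzdef, map_add, inner_add_left, inner_add_right, inner_add_right, hcross, hcross2]
      ring
    have hqa : -(‖L‖ * ‖a‖ ^ 2) ≤ ⟪L a, a⟫ := by
      have h1 := abs_real_inner_le_norm (L a) a
      have h2 := L.le_opNorm a
      have h3 := abs_le.mp h1
      nlinarith [norm_nonneg a, norm_nonneg (L a)]
    have hqb : γ * ‖b‖ ^ 2 ≤ ⟪L b, b⟫ := hqpos b hb.1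
    have hna : ‖a‖ ^ 2 ≤ ((m - μ) ^ n) ^ 2 * ‖v‖ ^ 2 := by
      have h1 := ha.2
      have h2 := mul_le_mul h1 h1 (norm_nonneg a)
        (mul_nonneg (pow_nonneg hmμ0.le n) (norm_nonneg v))
      nlinarith [h2]
    have hnb : ((m + μ) ^ n) ^ 2 * ‖w‖ ^ 2 ≤ ‖b‖ ^ 2 := by
      have h1 := hb.2
      have h2 := mul_le_mul h1 h1 (mul_nonneg (le_of_lt hq0) (norm_nonneg w)) (norm_nonneg b)
      nlinarith [h2]
    have hzq : 0 < ⟪L ((G ^ n) u), (G ^ n) u⟫ := by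
      rw [hexp]
      have h1 : -(‖L‖ * (((m - μ) ^ n) ^ 2 * ‖v‖ ^ 2)) ≤ ⟪L a, a⟫ := by
        have h2 : ‖L‖ * ‖a‖ ^ 2 ≤ ‖L‖ * (((m - μ) ^ n) ^ 2 * ‖v‖ ^ 2) :=
          mul_le_mul_of_nonneg_left hna (norm_nonneg L)
        linarith
      have h3 : γ * (((m + μ) ^ n) ^ 2 * ‖w‖ ^ 2) ≤ ⟪L b, b⟫ := by
        have h4 : γ * (((m + μ) ^ n) ^ 2 * ‖w‖ ^ 2) ≤ γ * ‖b‖ ^ 2 :=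
          mul_le_mul_of_nonneg_left hnb hγ.le
        linarith
      nlinarith [key]
    have hz0 : (G ^ n) u ≠ 0 := by
      intro h0
      rw [h0] at hzq
      simp at hzq
    have := hE3 ((G ^ n) u) hz hz0
    linarith
  -- conversely, every (-1)-eigenvector of U lies in the range of P
  have hnegE : ∀ x : H, U x = -x → x ∈ LinearMap.range P.toLinearMap := by
    intro x hx
    haveI : CompleteSpace (LinearMap.range P.toLinearMap) := hE1.completeSpace_coe
    obtain ⟨va, ha, vb, hb, hab⟩ :=
      Submodule.exists_add_mem_mem_orthogonal (K := LinearMap.range P.toLinearMap) x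
    have hUa : U va = -va := hEneg va ha
    have hUb : U vb = -vb := by
      have h1 : vb = x - va := by rw [hab]; abel
      rw [h1, map_sub, hx, hUa]
      abel
    have hqb := hqneg vb hUb
    have hqb2 := hE4 vb hb
    have hb2 : ‖vb‖ ^ 2 ≤ 0 := by nlinarith
    have hbz : vb = 0 := by
      have h1 : ‖vb‖ = 0 := by nlinarith [norm_nonneg vb, sq_nonneg ‖vb‖]
      exact norm_eq_zero.mp h1
    rw [hab, hbz, add_zero]
    exact ha
  -- the candidate projection
  set Pp : H →L[ℝ] H := (1/2 : ℝ) • (1 - U) with hPpdef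
  have hPpapp : ∀ x, Pp x = (1/2 : ℝ) • (x - U x) := by
    intro x
    rw [hPpdef]
    simp [ContinuousLinearMap.smul_apply, ContinuousLinearMap.sub_apply,
      ContinuousLinearMap.one_apply]
  have hPpsa : IsSelfAdjoint Pp := by
    rw [hPpdef, IsSelfAdjoint, star_smul, star_trivial, star_sub, star_one, hUsa.star_eq]
  have hUPp : ∀ x, U (Pp x) = -(Pp x) := by
    intro x
    rw [hPpapp x, map_smul, map_sub, hUUx x, ← smul_neg]
    congr 1
    abel
  have hPpfix : ∀ e : H, U e = -e → Pp e = e := by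
    intro e he
    rw [hPpapp e, he, sub_neg_eq_add]
    have h1 : e + e = (2:ℝ) • e := by module
    rw [h1, smul_smul]
    norm_num
  have hPpx : ∀ x, Pp (Pp x) = Pp x := fun x => hPpfix (Pp x) (hUPp x)
  -- conclude P = Pp
  refine ContinuousLinearMap.ext fun x => ?_
  have hPx : P x ∈ LinearMap.range P.toLinearMap := ⟨x, rfl⟩
  have hPpmem : Pp x ∈ LinearMap.range P.toLinearMap := hnegE _ (hUPp x)
  have hd : P x - Pp x ∈ LinearMap.range P.toLinearMap := Submodule.sub_mem _ hPx hPpmem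
  have h1 : ∀ e ∈ LinearMap.range P.toLinearMap, ⟪x - P x, e⟫ = 0 := by
    intro e he
    have he' : P e = e := (hfixmem e).mp he
    have hPPx : P (P x) = P x := (hfixmem (P x)).mp hPx
    calc ⟪x - P x, e⟫ = ⟪x - P x, P e⟫ := by rw [he']
      _ = ⟪P (x - P x), e⟫ := (nsSymm hPsa (x - P x) e).symm
      _ = 0 := by rw [map_sub, hPPx, sub_self, inner_zero_left]
  have h2 : ∀ e ∈ LinearMap.range P.toLinearMap, ⟪x - Pp x, e⟫ = 0 := by
    intro e he
    have he' : Pp e = e := hPpfix e (hEneg e he)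
    calc ⟪x - Pp x, e⟫ = ⟪x - Pp x, Pp e⟫ := by rw [he']
      _ = ⟪Pp (x - Pp x), e⟫ := (nsSymm hPpsa (x - Pp x) e).symm
      _ = 0 := by rw [map_sub, hPpx x, sub_self, inner_zero_left]
  have h3 : ⟪P x - Pp x, P x - Pp x⟫ = (0:ℝ) := by
    calc ⟪P x - Pp x, P x - Pp x⟫
        = ⟪x - Pp x, P x - Pp x⟫ - ⟪x - P x, P x - Pp x⟫ := by
          rw [← inner_sub_left]
          congr 1
          abel
      _ = 0 := by rw [h2 _ hd, h1 _ hd, sub_zero]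
  have h5 : P x - Pp x = 0 := inner_self_eq_zero.mp h3
  have h6 : P x = Pp x := sub_eq_zero.mp h5
  rw [h6, hPpdef]

/-- Any negative spectral projection of `L` equals `(1 - L R)/2` where `R` is an inverse
square root of `L²` commuting with `L`. -/
theorem nsProjEq {L P : H →L[ℝ] H} (hL : IsSelfAdjoint L) {c M : ℝ} (hc : 0 < c)
    (hcL : ∀ x, c * ‖x‖ ≤ ‖L x‖) (hM0 : 0 < M)
    {R : H →L[ℝ] H} (hRsa : IsSelfAdjoint R) (hcomm : L * R = R * L)
    (hunit : (L * L) * (R * R) = 1) (hform : ∀ x, (1 / M) * ‖x‖ ^ 2 ≤ ⟪R x, x⟫)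
    (hP : IsNegSpectralProj L P) :
    P = (1/2 : ℝ) • (1 - L * R) := by
  have hUsa : IsSelfAdjoint (L * R) := by
    rw [IsSelfAdjoint, star_mul, hRsa.star_eq, hL.star_eq, ← hcomm]
  have hUU : (L * R) * (L * R) = 1 := by
    have h1 : (L * R) * (L * R) = (L * L) * (R * R) := by
      rw [mul_assoc, ← mul_assoc R L R, ← hcomm, mul_assoc L R R, ← mul_assoc]
    rw [h1, hunit]
  have hLU : L * (L * R) = (L * R) * L := by
    rw [mul_assoc, ← hcomm]
  have hγ : (0:ℝ) < c ^ 2 / M := by positivity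
  have hLUform : ∀ x, (c ^ 2 / M) * ‖x‖ ^ 2 ≤ ⟪L ((L * R) x), x⟫ := by
    intro x
    have hop : L ((L * R) x) = L (R (L x)) := by
      have h1 : L * (L * R) = L * (R * L) := by rw [hcomm]
      have h2 := congrArg (fun (A : H →L[ℝ] H) => A x) h1
      simpa [ContinuousLinearMap.mul_apply] using h2
    rw [hop, nsSymm hL (R (L x)) x]
    have h1 := hform (L x)
    have h2 : c * ‖x‖ ≤ ‖L x‖ := hcL x
    have h3 : (c * ‖x‖) * (c * ‖x‖) ≤ ‖L x‖ * ‖L x‖ :=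
      mul_le_mul h2 h2 (mul_nonneg hc.le (norm_nonneg x)) (norm_nonneg (L x))
    have hM1 : (0:ℝ) < 1 / M := by positivity
    have h3' : c ^ 2 * ‖x‖ ^ 2 ≤ ‖L x‖ ^ 2 := by nlinarith [h3]
    have h4 := mul_le_mul_of_nonneg_left h3' hM1.le
    have h5 : (1 / M) * (c ^ 2 * ‖x‖ ^ 2) = c ^ 2 / M * ‖x‖ ^ 2 := by ring
    linarith
  exact nsProjEqU hL hγ hUsa hUU hLU hLUform hP

/-- Lower bound for invertible operators. -/
theorem nsUnitLowerBound {L : H →L[ℝ] H} (h : IsUnit L) :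
    ∃ c : ℝ, 0 < c ∧ ∀ x, c * ‖x‖ ≤ ‖L x‖ := by
  obtain ⟨u, hu⟩ := h
  have h1 : ((↑u⁻¹ : H →L[ℝ] H) * L) = 1 := by
    rw [← hu]
    exact u.inv_mul
  set V : H →L[ℝ] H := ↑u⁻¹ with hV
  refine ⟨(‖V‖ + 1)⁻¹, by positivity, fun x => ?_⟩
  have h2 : V (L x) = x := by
    have := congrArg (fun (A : H →L[ℝ] H) => A x) h1
    simpa [ContinuousLinearMap.mul_apply] using this
  have h3 : ‖x‖ ≤ ‖V‖ * ‖L x‖ := by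
    calc ‖x‖ = ‖V (L x)‖ := by rw [h2]
      _ ≤ ‖V‖ * ‖L x‖ := V.le_opNorm (L x)
  have h4 : ‖x‖ ≤ (‖V‖ + 1) * ‖L x‖ := by nlinarith [norm_nonneg (L x), norm_nonneg V]
  have h5 : (0:ℝ) < ‖V‖ + 1 := by positivity
  rw [inv_mul_le_iff₀ h5]
  linarith

end NegSpectralMain

/-- If `S` and `T` are bounded selfadjoint invertible operators on a Hilbert space `H`
with `S - T` compact, then the difference `P₋(S) - P₋(T)` of their negative spectral
projections is a compact operator. -/
theorem isCompactOperator_negSpectralProj_sub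
    {H : Type*} [NormedAddCommGroup H] [InnerProductSpace ℝ H] [CompleteSpace H]
    (S T : H →L[ℝ] H) (hS : IsSelfAdjoint S) (hT : IsSelfAdjoint T)
    (hSinv : IsUnit S) (hTinv : IsUnit T)
    (hcpt : IsCompactOperator (S - T))
    (P Q : H →L[ℝ] H) (hP : IsNegSpectralProj S P) (hQ : IsNegSpectralProj T Q) :
    IsCompactOperator (P - Q) := by
  rcases subsingleton_or_nontrivial H with hsub | hnt
  · haveI : Subsingleton (H →L[ℝ] H) :=
      ⟨fun f g => ContinuousLinearMap.ext fun x => Subsingleton.elim _ _⟩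
    have h0 : P - Q = 0 := Subsingleton.elim _ _
    rw [h0]
    exact nsCptZero
  · obtain ⟨cS, hcS0, hcS⟩ := nsUnitLowerBound hSinv
    obtain ⟨cT, hcT0, hcT⟩ := nsUnitLowerBound hTinv
    set c : ℝ := min cS cT with hcdef
    have hc : 0 < c := lt_min hcS0 hcT0
    have hcS' : ∀ x, c * ‖x‖ ≤ ‖S x‖ := fun x =>
      le_trans (mul_le_mul_of_nonneg_right (min_le_left _ _) (norm_nonneg x)) (hcS x)
    have hcT' : ∀ x, c * ‖x‖ ≤ ‖T x‖ := fun x =>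
      le_trans (mul_le_mul_of_nonneg_right (min_le_right _ _) (norm_nonneg x)) (hcT x)
    obtain ⟨x0, hx0⟩ := exists_ne (0 : H)
    have hx0n : 0 < ‖x0‖ := norm_pos_iff.mpr hx0
    have hcMS : c ≤ ‖S‖ := by
      have h1 := hcS' x0
      have h2 := S.le_opNorm x0
      nlinarith
    have hcMT : c ≤ ‖T‖ := by
      have h1 := hcT' x0
      have h2 := T.le_opNorm x0
      nlinarith
    set M : ℝ := max ‖S‖ ‖T‖ + 1 with hMdef
    have hMS : ‖S‖ < M := by
      have := le_max_left ‖S‖ ‖T‖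
      rw [hMdef]
      linarith
    have hMT : ‖T‖ < M := by
      have := le_max_right ‖S‖ ‖T‖
      rw [hMdef]
      linarith
    have hM0 : (0:ℝ) < M := lt_of_le_of_lt (norm_nonneg S) hMS
    obtain ⟨RS, hRS, hRSsa, hRScomm, hRSunit, hRSform⟩ := nsMain hS hc hcS' hMS hcMS
    obtain ⟨RT, hRT, hRTsa, hRTcomm, hRTunit, hRTform⟩ := nsMain hT hc hcT' hMT hcMT
    have hPeq := nsProjEq hS hc hcS' hM0 hRSsa hRScomm hRSunit hRSform hP
    have hQeq := nsProjEq hT hc hcT' hM0 hRTsa hRTcomm hRTunit hRTform hQ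
    have hST2 : IsCompactOperator ⇑(S * S - T * T) := by
      have hid : S * S - T * T = S * (S - T) + (S - T) * T := by noncomm_ring
      rw [hid]
      exact nsCptAdd (nsCptMulLeft S hcpt) (nsCptMulRight T hcpt)
    have hBdiff : IsCompactOperator
        ⇑(((1 : H →L[ℝ] H) - (1 / M ^ 2 : ℝ) • (T * T)) - (1 - (1 / M ^ 2 : ℝ) • (S * S))) := by
      have hid : ((1 : H →L[ℝ] H) - (1 / M ^ 2 : ℝ) • (T * T)) - (1 - (1 / M ^ 2 : ℝ) • (S * S))
          = (1 / M ^ 2 : ℝ) • (S * S - T * T) := by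
        rw [smul_sub]
        abel
      rw [hid]
      exact nsCptSmul _ hST2
    have hYdiffcpt : ∀ n, IsCompactOperator ⇑(nsY M T n - nsY M S n) := by
      intro n
      exact nsCptAevalSub hBdiff (nsQ M n)
    have hRdiff : IsCompactOperator ⇑(RT - RS) := by
      have htend : Tendsto (fun n => nsY M T n - nsY M S n) Filter.atTop (nhds (RT - RS)) :=
        hRT.sub hRS
      exact isCompactOperator_of_tendsto htend (Filter.Eventually.of_forall hYdiffcpt)
    have hfinal : P - Q = (1/2 : ℝ) • (T * RT - S * RS) := by
      rw [hPeq, hQeq, ← smul_sub]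
      congr 1
      abel
    rw [hfinal]
    apply nsCptSmul
    have hid2 : T * RT - S * RS = T * (RT - RS) + (T - S) * RS := by noncomm_ring
    rw [hid2]
    refine nsCptAdd (nsCptMulLeft T hRdiff) (nsCptMulRight RS ?_)
    have hTS : T - S = -(S - T) := by abel
    rw [hTS]
    exact hcpt.neg
end
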